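/- For all λ > 0, 4λ² ∫₀^∞ ∫₀^∞ ∫₀^∞ λπ ĥ(t,h₁,h₂)² e^{−λπ ĥ(t,h₁,h₂)²} dt dh₁ dh₂ = 6√λ / π, where ĥ(t,h₁,h₂)² := (1/4)[ t² + 2(h₁² + h₂²) + (h₂² − h₁²)²/t² ]. This triple integral is the intensity λ_{I'} of the tropical-interference handover point process, i.e. the handover frequency in the 2-Voronoi tessellation of a planar Poisson point process of intensity λ. -/

import Mathlib

open MeasureTheory Set

section auxiliary_handover
open Real

lemma rpow_int_helper {b : ℝ} (hb : 0 < b) (q : ℕ) (hq : -1 < (q:ℝ)) :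
    ∫ x in Ioi (0:ℝ), x ^ q * Real.exp (-b * x^2)
      = b ^ (-((q:ℝ)+1)/2) * (1/2) * Real.Gamma (((q:ℝ)+1)/2) := by
  rw [← integral_rpow_mul_exp_neg_mul_rpow two_pos hq hb]
  refine setIntegral_congr_fun measurableSet_Ioi (fun x hx => ?_)
  rw [Real.rpow_natCast, Real.rpow_two]

lemma int_x1 {b : ℝ} (hb : 0 < b) :
    ∫ x in Ioi (0:ℝ), x * Real.exp (-b * x^2) = 1/(2*b) := by
  have h := rpow_int_helper hb 1 (by norm_num)
  simp only [Nat.cast_one, pow_one] at h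
  rw [h]
  norm_num [Real.Gamma_one, Real.rpow_neg_one]

lemma Gamma_three_halves : Real.Gamma (3/2) = Real.sqrt π / 2 := by
  have h := Real.Gamma_add_one (s := 1/2) (by norm_num)
  rw [show (1:ℝ)/2 + 1 = 3/2 by norm_num] at h
  rw [h, Real.Gamma_one_half_eq]
  ring

lemma int_x2 {b : ℝ} (hb : 0 < b) :
    ∫ x in Ioi (0:ℝ), x^2 * Real.exp (-b * x^2) = Real.sqrt π / (4 * b * Real.sqrt b) := by
  have h := rpow_int_helper hb 2 (by norm_num)
  rw [show ((2:ℕ):ℝ) = 2 by norm_num] at h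
  rw [h, show (-(2+1)/2 : ℝ) = -1 + -(1/2) by norm_num, Real.rpow_add hb,
    Real.rpow_neg_one, Real.rpow_neg hb.le, ← Real.sqrt_eq_rpow,
    show ((2:ℝ)+1)/2 = 3/2 by norm_num, Gamma_three_halves]
  have h2 : Real.sqrt b ≠ 0 := by positivity
  field_simp
  ring_nf

lemma int_x3 {b : ℝ} (hb : 0 < b) :
    ∫ x in Ioi (0:ℝ), x^3 * Real.exp (-b * x^2) = 1/(2*b^2) := by
  have h := rpow_int_helper hb 3 (by norm_num)
  rw [show ((3:ℕ):ℝ) = 3 by norm_num] at h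
  rw [h, show ((3:ℝ)+1)/2 = 2 by norm_num, Real.Gamma_two,
    show (-(3+1)/2 : ℝ) = ((-2 : ℤ) : ℝ) by norm_num, Real.rpow_intCast, zpow_neg]
  norm_num [zpow_two, sq]

section Tails
variable {b : ℝ}

lemma tendsto_bsq_atTop (hb : 0 < b) : Filter.Tendsto (fun h : ℝ => b * h^2) Filter.atTop Filter.atTop :=
  (Filter.tendsto_pow_atTop two_ne_zero).const_mul_atTop hb

lemma hasDerivAt_F1 (hb : 0 < b) (x : ℝ) :
    HasDerivAt (fun h : ℝ => -Real.exp (-b*h^2) / (2*b)) (x * Real.exp (-b*x^2)) x := by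
  have h1 : HasDerivAt (fun h : ℝ => -b*h^2) (-b*(2*x)) x := by
    simpa using (hasDerivAt_pow 2 x).const_mul (-b)
  have := ((h1.exp).neg).div_const (2*b)
  refine this.congr_deriv ?_
  field_simp

lemma tendsto_F1 (hb : 0 < b) : Filter.Tendsto (fun h : ℝ => -Real.exp (-b*h^2) / (2*b))
    Filter.atTop (nhds 0) := by
  have : Filter.Tendsto (fun h : ℝ => Real.exp (-(b*h^2))) Filter.atTop (nhds 0) :=
    Real.tendsto_exp_neg_atTop_nhds_zero.comp (tendsto_bsq_atTop hb)
  simpa [neg_mul] using this.neg.div_const (2*b)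

lemma tail_x1 (hb : 0 < b) {x : ℝ} (hx : 0 ≤ x) :
    ∫ h in Ioi x, h * Real.exp (-b*h^2) = Real.exp (-b*x^2) / (2*b) := by
  have := integral_Ioi_of_hasDerivAt_of_nonneg (a := x)
    (g := fun h : ℝ => -Real.exp (-b*h^2) / (2*b))
    (g' := fun h : ℝ => h * Real.exp (-b*h^2)) (l := 0)
    (Continuous.continuousWithinAt (by continuity)) (fun y _ => hasDerivAt_F1 hb y)
    (fun y hy => mul_nonneg (le_trans hx (le_of_lt hy)) (Real.exp_nonneg _))
    (tendsto_F1 hb)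
  rw [this]
  ring

lemma tail_x1_int (hb : 0 < b) {x : ℝ} (hx : 0 ≤ x) :
    IntegrableOn (fun h => h * Real.exp (-b*h^2)) (Ioi x) :=
  integrableOn_Ioi_deriv_of_nonneg (Continuous.continuousWithinAt (by continuity)) (fun y _ => hasDerivAt_F1 hb y)
    (fun y hy => mul_nonneg (le_trans hx (le_of_lt hy)) (Real.exp_nonneg _)) (tendsto_F1 hb)

lemma hasDerivAt_F3 (x : ℝ) (hb : 0 < b) :
    HasDerivAt (fun h : ℝ => -((b*h^2+1) * Real.exp (-b*h^2)) / (2*b^2))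
      (x^3 * Real.exp (-b*x^2)) x := by
  have h1 : HasDerivAt (fun h : ℝ => -b*h^2) (-b*(2*x)) x := by
    simpa using (hasDerivAt_pow 2 x).const_mul (-b)
  have h2 : HasDerivAt (fun h : ℝ => b*h^2+1) (b*(2*x)) x := by
    simpa using ((hasDerivAt_pow 2 x).const_mul b).add_const 1
  have := ((h2.mul h1.exp).neg).div_const (2*b^2)
  refine this.congr_deriv ?_
  field_simp
  ring

lemma tendsto_F3 (hb : 0 < b) : Filter.Tendsto (fun h : ℝ => -((b*h^2+1) * Real.exp (-b*h^2)) / (2*b^2))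
    Filter.atTop (nhds 0) := by
  have key : Filter.Tendsto (fun y : ℝ => (y+1) * Real.exp (-y)) Filter.atTop (nhds 0) := by
    have h1 := tendsto_pow_mul_exp_neg_atTop_nhds_zero 1
    have h2 := Real.tendsto_exp_neg_atTop_nhds_zero
    have := h1.add h2
    simpa [add_mul, pow_one] using this
  have : Filter.Tendsto (fun h : ℝ => (b*h^2+1) * Real.exp (-(b*h^2)))
      Filter.atTop (nhds 0) := key.comp (tendsto_bsq_atTop hb)
  simpa [neg_mul] using this.neg.div_const (2*b^2)

lemma tail_x3 (hb : 0 < b) {x : ℝ} (hx : 0 ≤ x) :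
    ∫ h in Ioi x, h^3 * Real.exp (-b*h^2) = (b*x^2+1) * Real.exp (-b*x^2) / (2*b^2) := by
  have := integral_Ioi_of_hasDerivAt_of_nonneg (a := x)
    (g := fun h : ℝ => -((b*h^2+1) * Real.exp (-b*h^2)) / (2*b^2))
    (g' := fun h : ℝ => h^3 * Real.exp (-b*h^2)) (l := 0)
    (Continuous.continuousWithinAt (by continuity)) (fun y _ => hasDerivAt_F3 y hb)
    (fun y hy => mul_nonneg (pow_nonneg (le_trans hx (le_of_lt hy)) 3) (Real.exp_nonneg _))
    (tendsto_F3 hb)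
  rw [this]
  ring

lemma tail_x3_int (hb : 0 < b) {x : ℝ} (hx : 0 ≤ x) :
    IntegrableOn (fun h => h^3 * Real.exp (-b*h^2)) (Ioi x) :=
  integrableOn_Ioi_deriv_of_nonneg (Continuous.continuousWithinAt (by continuity)) (fun y _ => hasDerivAt_F3 y hb)
    (fun y hy => mul_nonneg (pow_nonneg (le_trans hx (le_of_lt hy)) 3) (Real.exp_nonneg _))
    (tendsto_F3 hb)

lemma intExp (hb : 0 < b) {x : ℝ} : IntegrableOn (fun h : ℝ => Real.exp (-b*h^2)) (Ioi x) :=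
  (integrable_exp_neg_mul_sq hb).integrableOn

lemma intX2 (hb : 0 < b) {x : ℝ} (hx : 0 ≤ x) :
    IntegrableOn (fun h : ℝ => h^2 * Real.exp (-b*h^2)) (Ioi x) := by
  refine IntegrableOn.mono_set ?_ (Ioi_subset_Ioi hx)
  have h := integrableOn_rpow_mul_exp_neg_mul_sq hb (s := 2) (by norm_num)
  refine h.congr_fun (fun y hy => ?_) measurableSet_Ioi
  simp only [Real.rpow_two]

lemma tailExp_le (hb : 0 < b) {x : ℝ} (hx : 0 < x) :
    ∫ h in Ioi x, Real.exp (-b*h^2) ≤ Real.exp (-b*x^2) / (2*b*x) := by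
  have h1 : ∫ h in Ioi x, Real.exp (-b*h^2) ≤ ∫ h in Ioi x, (h/x) * Real.exp (-b*h^2) := by
    refine setIntegral_mono_on (intExp hb) (IntegrableOn.congr_fun
      ((tail_x1_int hb hx.le).div_const x) (fun y _ => by ring) measurableSet_Ioi) measurableSet_Ioi (fun y hy => ?_)
    have : (1:ℝ) ≤ y/x := (one_le_div hx).2 (le_of_lt hy)
    nlinarith [Real.exp_nonneg (-b*y^2)]
  calc _ ≤ _ := h1
    _ = (∫ h in Ioi x, h * Real.exp (-b*h^2)) / x := by
        rw [← integral_div]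
        exact setIntegral_congr_fun measurableSet_Ioi (fun y _ => by ring)
    _ = Real.exp (-b*x^2) / (2*b*x) := by rw [tail_x1 hb hx.le]; field_simp

lemma tailX2_le (hb : 0 < b) {x : ℝ} (hx : 0 < x) :
    ∫ h in Ioi x, h^2 * Real.exp (-b*h^2) ≤ (b*x^2+1) * Real.exp (-b*x^2) / (2*b^2*x) := by
  have h1 : ∫ h in Ioi x, h^2 * Real.exp (-b*h^2)
      ≤ ∫ h in Ioi x, (h^3/x) * Real.exp (-b*h^2) := by
    refine setIntegral_mono_on (intX2 hb hx.le) (IntegrableOn.congr_fun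
      ((tail_x3_int hb hx.le).div_const x) (fun y _ => by ring) measurableSet_Ioi) measurableSet_Ioi (fun y hy => ?_)
    have hy' : x ≤ y := le_of_lt hy
    have : y^2 ≤ y^3/x := by
      rw [le_div_iff₀ hx]
      nlinarith
    nlinarith [Real.exp_nonneg (-b*y^2)]
  calc _ ≤ _ := h1
    _ = (∫ h in Ioi x, h^3 * Real.exp (-b*h^2)) / x := by
        rw [← integral_div]
        exact setIntegral_congr_fun measurableSet_Ioi (fun y _ => by ring)
    _ = (b*x^2+1) * Real.exp (-b*x^2) / (2*b^2*x) := by rw [tail_x3 hb hx.le]; field_simp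

end Tails

noncomputable def gfun (c m u : ℝ) : ℝ := c*(u^2/4+m^2) * Real.exp (-(c*(u^2/4+m^2)))

lemma gfun_even (c m u : ℝ) : gfun c m (-u) = gfun c m u := by simp [gfun, neg_sq]

lemma gfun_cont (c m : ℝ) : Continuous (gfun c m) := by unfold gfun; fun_prop

lemma gfun_nonneg {c : ℝ} (hc : 0 < c) (m u : ℝ) : 0 ≤ gfun c m u :=
  mul_nonneg (by positivity) (Real.exp_nonneg _)

lemma w_exp_bound (w : ℝ) (hw : 0 ≤ w) : w * Real.exp (-w) ≤ Real.exp (-(w/2)) := by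
  have e : Real.exp (w/4) * Real.exp (w/4) = Real.exp (w/2) := by
    rw [← Real.exp_add]; congr 1; ring
  have h2 : w ≤ Real.exp (w/2) := by
    nlinarith [Real.add_one_le_exp (w/4), sq_nonneg (1 - w/4), Real.exp_pos (w/4)]
  calc w * Real.exp (-w) ≤ Real.exp (w/2) * Real.exp (-w) :=
        mul_le_mul_of_nonneg_right h2 (Real.exp_nonneg _)
    _ = Real.exp (-(w/2)) := by rw [← Real.exp_add]; congr 1; ring

lemma gfun_le {c : ℝ} (hc : 0 < c) (m u : ℝ) : gfun c m u ≤ Real.exp (-(c/8*u^2)) := by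
  have hw : 0 ≤ c*(u^2/4+m^2) := by positivity
  refine le_trans (w_exp_bound _ hw) ?_
  apply Real.exp_le_exp.2
  nlinarith [sq_nonneg m, sq_nonneg u]

lemma gfun_integrable {c : ℝ} (hc : 0 < c) (m : ℝ) : Integrable (gfun c m) := by
  refine Integrable.mono' (integrable_exp_neg_mul_sq (by positivity : (0:ℝ) < c/8))
    (gfun_cont c m).aestronglyMeasurable (Filter.Eventually.of_forall fun u => ?_)
  rw [Real.norm_eq_abs, abs_of_nonneg (gfun_nonneg hc m u)]
  simpa [neg_mul] using gfun_le hc m u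

lemma gpsi_integrable {c : ℝ} (hc : 0 < c) (m a : ℝ) (ha : 0 ≤ a) :
    IntegrableOn (fun t => gfun c m (t - a/t)) (Ioi 0) := by
  have hmaj : Integrable (fun t : ℝ => Real.exp (c*a/4) * Real.exp (-(c/8)*t^2)) :=
    (integrable_exp_neg_mul_sq (by positivity : (0:ℝ) < c/8)).const_mul _
  refine Integrable.mono' hmaj.integrableOn ?_ ?_
  · refine ContinuousOn.aestronglyMeasurable ?_ measurableSet_Ioi
    exact (gfun_cont c m).comp_continuousOn
      (continuousOn_id.sub (continuousOn_const.div continuousOn_id (fun t ht => ne_of_gt ht)))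
  · rw [ae_restrict_iff' measurableSet_Ioi]
    refine Filter.Eventually.of_forall fun t ht => ?_
    rw [Real.norm_eq_abs, abs_of_nonneg (gfun_nonneg hc m _)]
    have h1 := gfun_le hc m (t - a/t)
    have ht : (0:ℝ) < t := ht
    have h2 : Real.exp (-(c/8*(t - a/t)^2)) ≤ Real.exp (c*a/4) * Real.exp (-(c/8)*t^2) := by
      rw [← Real.exp_add]
      apply Real.exp_le_exp.2
      have : (t - a/t)^2 = t^2 - 2*a + (a/t)^2 := by field_simp; ring
      nlinarith [sq_nonneg (a/t)]
    exact le_trans h1 h2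

lemma psi_injOn {a : ℝ} (ha : 0 ≤ a) : InjOn (fun t : ℝ => t - a/t) (Ioi 0) := by
  intro t ht s hs heq
  simp only at heq
  have ht' : (0:ℝ) < t := ht
  have hs' : (0:ℝ) < s := hs
  have htne : t ≠ 0 := ne_of_gt ht'
  have hsne : s ≠ 0 := ne_of_gt hs'
  have e1 : (t - a/t)*(t*s) = t^2*s - a*s := by field_simp
  have e2 : (s - a/s)*(t*s) = s^2*t - a*t := by field_simp
  have h3 : t^2*s - a*s = s^2*t - a*t := by rw [← e1, ← e2, heq]
  have key : (t - s) * (t*s + a) = 0 := by linear_combination h3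
  rcases mul_eq_zero.1 key with h | h
  · linarith
  · nlinarith

lemma psi_image {a : ℝ} (ha : 0 < a) : (fun t : ℝ => t - a/t) '' Ioi 0 = univ := by
  apply eq_univ_of_forall
  intro u
  have hs2 : Real.sqrt (u^2+4*a) ^ 2 = u^2 + 4*a := Real.sq_sqrt (by positivity)
  have habs : |u| < Real.sqrt (u^2+4*a) := by
    rw [← Real.sqrt_sq_eq_abs]
    exact Real.sqrt_lt_sqrt (sq_nonneg u) (by linarith)
  have htpos : 0 < (u + Real.sqrt (u^2+4*a))/2 := by
    have := neg_abs_le u; linarith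
  refine ⟨(u + Real.sqrt (u^2+4*a))/2, htpos, ?_⟩
  have htne : (u + Real.sqrt (u^2+4*a))/2 ≠ 0 := ne_of_gt htpos
  have key : ((u + Real.sqrt (u^2+4*a))/2)^2 - u*((u + Real.sqrt (u^2+4*a))/2) - a = 0 := by
    linear_combination hs2/4
  show (u + Real.sqrt (u^2+4*a))/2 - a/((u + Real.sqrt (u^2+4*a))/2) = u
  have hdiv : a/((u + Real.sqrt (u^2+4*a))/2) = (u + Real.sqrt (u^2+4*a))/2 - u := by
    rw [div_eq_iff htne]; linear_combination -key
  rw [hdiv]; ring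

lemma phi_image {a : ℝ} (ha : 0 < a) : (fun t : ℝ => a/t) '' Ioi 0 = Ioi 0 := by
  ext y
  constructor
  · rintro ⟨t, ht, rfl⟩
    exact div_pos ha ht
  · intro hy
    exact ⟨a/y, div_pos ha hy, by field_simp⟩

lemma glasser {c : ℝ} (hc : 0 < c) (m a : ℝ) (ha : 0 ≤ a) :
    ∫ t in Ioi 0, gfun c m (t - a/t) = (∫ u, gfun c m u)/2 := by
  rcases eq_or_lt_of_le ha with rfl | ha'
  · -- a = 0 case
    have h1 : ∫ u, gfun c m u = ∫ u, gfun c m |u| :=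
      integral_congr_ae (Filter.Eventually.of_forall fun u => by
        show gfun c m u = gfun c m |u|
        rcases abs_choice u with h | h
        · rw [h]
        · rw [h, gfun_even])
    rw [h1, integral_comp_abs]
    have : ∀ t : ℝ, t - (0:ℝ)/t = t := fun t => by simp
    simp only [this]
    ring
  · -- a > 0 case
    have hψd : ∀ t ∈ Ioi (0:ℝ), HasDerivWithinAt (fun t : ℝ => t - a/t) (1 + a/t^2) (Ioi 0) t := by
      intro t ht
      have ht' : (0:ℝ) < t := ht
      have h0 : HasDerivAt (fun t : ℝ => t - a * t⁻¹) (1 - a * (-(t^2)⁻¹)) t :=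
        (hasDerivAt_id t).sub ((hasDerivAt_inv ht'.ne').const_mul a)
      have h1 : (fun t : ℝ => t - a * t⁻¹) = (fun t : ℝ => t - a/t) := by
        funext x; rw [div_eq_mul_inv]
      rw [h1] at h0
      have h2 : HasDerivAt (fun t : ℝ => t - a/t) (1 + a/t^2) t := by
        convert h0 using 1; field_simp; ring
      exact h2.hasDerivWithinAt
    have hφd : ∀ t ∈ Ioi (0:ℝ), HasDerivWithinAt (fun t : ℝ => a/t) (-(a/t^2)) (Ioi 0) t := by
      intro t ht
      have ht' : (0:ℝ) < t := ht
      have h0 : HasDerivAt (fun t : ℝ => a * t⁻¹) (a * (-(t^2)⁻¹)) t :=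
        (hasDerivAt_inv ht'.ne').const_mul a
      have h1 : (fun t : ℝ => a * t⁻¹) = (fun t : ℝ => a/t) := by
        funext x; rw [div_eq_mul_inv]
      rw [h1] at h0
      have h2 : HasDerivAt (fun t : ℝ => a/t) (-(a/t^2)) t := by
        convert h0 using 1; field_simp
      exact h2.hasDerivWithinAt
    have hφinj : InjOn (fun t : ℝ => a/t) (Ioi 0) := by
      intro t ht s hs heq
      simp only at heq
      have ht' : (0:ℝ) < t := ht
      have hs' : (0:ℝ) < s := hs
      field_simp at heq
      exact heq.symm
    -- step (ii): full substitution
    have hii := integral_image_eq_integral_abs_deriv_smul measurableSet_Ioi hψd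
      (psi_injOn ha) (gfun c m)
    rw [psi_image ha', Measure.restrict_univ] at hii
    -- step (i): reflection
    have hi := integral_image_eq_integral_abs_deriv_smul measurableSet_Ioi hφd
      hφinj (fun y => gfun c m (y - a/y))
    rw [phi_image ha'] at hi
    -- simplify step (i)
    have hi' : ∫ t in Ioi 0, gfun c m (t - a/t)
        = ∫ t in Ioi 0, (a/t^2) * gfun c m (t - a/t) := by
      rw [hi]
      refine setIntegral_congr_fun measurableSet_Ioi (fun t ht => ?_)
      have ht' : (0:ℝ) < t := ht
      have hpos : (0:ℝ) < a/t^2 := div_pos ha' (pow_pos ht' 2)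
      have hrefl : a/t - a/(a/t) = -(t - a/t) := by field_simp; ring
      rw [smul_eq_mul, hrefl, gfun_even, abs_neg, abs_of_pos hpos]
    have hψint := gpsi_integrable hc m a ha
    have hfull : IntegrableOn (fun t => |1 + a/t^2| • gfun c m (t - a/t)) (Ioi 0) := by
      rw [← integrableOn_image_iff_integrableOn_abs_deriv_smul measurableSet_Ioi hψd
        (psi_injOn ha)]
      rw [psi_image ha']
      exact integrableOn_univ.2 (gfun_integrable hc m)
    have honepos : ∀ t : ℝ, t ∈ Ioi (0:ℝ) → (0:ℝ) < 1 + a/t^2 := by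
      intro t ht
      have ht' : (0:ℝ) < t := ht
      have : (0:ℝ) < a/t^2 := div_pos ha' (pow_pos ht' 2)
      linarith
    have hfull' : IntegrableOn (fun t => (1 + a/t^2) * gfun c m (t - a/t)) (Ioi 0) :=
      IntegrableOn.congr_fun hfull
        (fun t ht => by rw [smul_eq_mul, abs_of_pos (honepos t ht)]) measurableSet_Ioi
    have hrest : IntegrableOn (fun t => (a/t^2) * gfun c m (t - a/t)) (Ioi 0) :=
      IntegrableOn.congr_fun (hfull'.sub hψint)
        (fun t ht => by simp only [Pi.sub_apply]; ring) measurableSet_Ioi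
    have hsum : ∫ u, gfun c m u
        = (∫ t in Ioi 0, gfun c m (t - a/t))
          + ∫ t in Ioi 0, (a/t^2) * gfun c m (t - a/t) := by
      rw [hii, ← integral_add hψint hrest]
      refine setIntegral_congr_fun measurableSet_Ioi (fun t ht => ?_)
      rw [smul_eq_mul, abs_of_pos (honepos t ht)]
      ring
    rw [← hi'] at hsum
    linarith

lemma int_x2_real {b : ℝ} (hb : 0 < b) :
    ∫ u : ℝ, u^2 * Real.exp (-b*u^2) = Real.sqrt π / (2*b*Real.sqrt b) := by
  have h : ∫ u : ℝ, u^2 * Real.exp (-b*u^2)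
      = ∫ u : ℝ, (fun x => x^2 * Real.exp (-b*x^2)) |u| := by
    refine integral_congr_ae (Filter.Eventually.of_forall fun u => ?_)
    simp only [sq_abs]
  have h2 := integral_comp_abs (f := fun x : ℝ => x^2 * Real.exp (-b*x^2))
  rw [h]
  erw [h2]
  rw [int_x2 hb]
  ring

lemma sqrt_quarter {c : ℝ} (hc : 0 < c) : Real.sqrt (c/4) = Real.sqrt c / 2 := by
  rw [show (4:ℝ) = 2^2 by norm_num, Real.sqrt_div hc.le, Real.sqrt_sq (by norm_num : (0:ℝ) ≤ 2)]

lemma int_gfun {c : ℝ} (hc : 0 < c) (m : ℝ) :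
    ∫ u, gfun c m u
      = Real.sqrt π * Real.exp (-(c*m^2)) * (1/Real.sqrt c + 2*m^2*Real.sqrt c) := by
  have hc4 : (0:ℝ) < c/4 := by positivity
  have h1 : Integrable (fun u : ℝ => u^2 * Real.exp (-(c/4)*u^2)) := by
    refine (integrable_rpow_mul_exp_neg_mul_sq hc4 (by norm_num : (-1:ℝ) < 2)).congr
      (Filter.Eventually.of_forall fun u => ?_)
    have h2 : ((2:ℝ)) = ((2:ℕ):ℝ) := by norm_num
    simp only [h2, Real.rpow_natCast]
  have h2 : Integrable (fun u : ℝ => Real.exp (-(c/4)*u^2)) := integrable_exp_neg_mul_sq hc4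
  have step : ∫ u, gfun c m u = ∫ u, Real.exp (-(c*m^2)) *
      ((c/4) * (u^2 * Real.exp (-(c/4)*u^2)) + (c*m^2) * Real.exp (-(c/4)*u^2)) := by
    refine integral_congr_ae (Filter.Eventually.of_forall fun u => ?_)
    show gfun c m u = _
    have harg : -(c*(u^2/4+m^2)) = -(c*m^2) + -(c/4)*u^2 := by ring
    rw [gfun, harg, Real.exp_add]
    ring
  rw [step, integral_const_mul, integral_add ((h1.const_mul _)) (h2.const_mul _),
    integral_const_mul, integral_const_mul, int_x2_real hc4, integral_gaussian]
  have h4 : Real.sqrt (π/(c/4)) = Real.sqrt π / (Real.sqrt c / 2) := by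
    rw [Real.sqrt_div pi_pos.le, sqrt_quarter hc]
  rw [h4, sqrt_quarter hc]
  have hs2 : Real.sqrt c ^ 2 = c := Real.sq_sqrt hc.le
  have hspos : 0 < Real.sqrt c := Real.sqrt_pos.2 hc
  set s := Real.sqrt c with hs
  rw [← hs2]
  field_simp

lemma inner_val {c : ℝ} (hc : 0 < c) (m a : ℝ) (ha : 0 ≤ a) :
    ∫ t in Ioi 0, gfun c m (t - a/t)
      = Real.sqrt π / 2 * Real.exp (-(c*m^2)) * (1/Real.sqrt c + 2*m^2*Real.sqrt c) := by
  rw [glasser hc m a ha, int_gfun hc m]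
  ring

noncomputable def Kfun (c m : ℝ) : ℝ :=
  Real.sqrt π / 2 * Real.exp (-(c*m^2)) * (1/Real.sqrt c + 2*m^2*Real.sqrt c)

lemma Kfun_cont (c : ℝ) : Continuous (Kfun c) := by unfold Kfun; fun_prop

lemma Kfun_nonneg {c : ℝ} (hc : 0 < c) (m : ℝ) : 0 ≤ Kfun c m := by
  unfold Kfun
  have := Real.sqrt_nonneg π
  have h2 := Real.sqrt_nonneg c
  have h3 := Real.exp_nonneg (-(c*m^2))
  have h4 : 0 ≤ 1/Real.sqrt c + 2*m^2*Real.sqrt c := by positivity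
  positivity

lemma Kfun_expand (c m : ℝ) :
    Kfun c m = (Real.sqrt π / (2*Real.sqrt c)) * Real.exp (-c*m^2)
      + (Real.sqrt π * Real.sqrt c) * (m^2 * Real.exp (-c*m^2)) := by
  unfold Kfun
  rw [neg_mul]
  ring

lemma Kfun_integrableOn {c : ℝ} (hc : 0 < c) {x : ℝ} (hx : 0 ≤ x) :
    IntegrableOn (Kfun c) (Ioi x) := by
  refine IntegrableOn.congr_fun ?_ (fun m _ => (Kfun_expand c m).symm) measurableSet_Ioi
  exact ((intExp hc).const_mul _).add ((intX2 hc hx).const_mul _)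

lemma arg_identity (h₁ h₂ : ℝ) (hh₁ : 0 < h₁) (hh₂ : 0 < h₂) (t : ℝ) (ht : 0 < t) :
    1/4 * (t^2 + 2*(h₁^2 + h₂^2) + (h₂^2 - h₁^2)^2/t^2)
      = (t - |h₂^2 - h₁^2|/t)^2/4 + (max h₁ h₂)^2 := by
  have htne : t ≠ 0 := ne_of_gt ht
  rcases le_total h₁ h₂ with h | h
  · rw [abs_of_nonneg (by nlinarith : (0:ℝ) ≤ h₂^2 - h₁^2), max_eq_right h]
    field_simp
    ring
  · rw [abs_of_nonpos (by nlinarith : h₂^2 - h₁^2 ≤ 0), max_eq_left h]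
    field_simp
    ring

lemma inner_integral {c : ℝ} (hc : 0 < c) (h₁ h₂ : ℝ) (hh₁ : 0 < h₁) (hh₂ : 0 < h₂) :
    ∫ t in Ioi (0:ℝ),
        c * (1/4 * (t^2 + 2*(h₁^2 + h₂^2) + (h₂^2 - h₁^2)^2/t^2)) *
          Real.exp (-(c * (1/4 * (t^2 + 2*(h₁^2 + h₂^2) + (h₂^2 - h₁^2)^2/t^2))))
      = Kfun c (max h₁ h₂) := by
  have hcongr : ∀ t ∈ Ioi (0:ℝ),
      c * (1/4 * (t^2 + 2*(h₁^2 + h₂^2) + (h₂^2 - h₁^2)^2/t^2)) *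
          Real.exp (-(c * (1/4 * (t^2 + 2*(h₁^2 + h₂^2) + (h₂^2 - h₁^2)^2/t^2))))
        = gfun c (max h₁ h₂) (t - |h₂^2 - h₁^2|/t) := by
    intro t ht
    rw [arg_identity h₁ h₂ hh₁ hh₂ t ht, gfun]
  rw [setIntegral_congr_fun measurableSet_Ioi hcongr,
    inner_val hc (max h₁ h₂) _ (abs_nonneg _), Kfun]

lemma h1_integral {c : ℝ} (hc : 0 < c) {h₂ : ℝ} (hh₂ : 0 < h₂) :
    ∫ h₁ in Ioi (0:ℝ), Kfun c (max h₁ h₂)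
      = h₂ * Kfun c h₂ + ∫ h in Ioi h₂, Kfun c h := by
  have hint1 : IntegrableOn (fun h₁ => Kfun c (max h₁ h₂)) (Ioc 0 h₂) := by
    refine IntegrableOn.congr_fun (f := fun _ => Kfun c h₂)
      (integrableOn_const measure_Ioc_lt_top.ne) (fun h₁ ht => ?_) measurableSet_Ioc
    rw [max_eq_right ht.2]
  have hint2 : IntegrableOn (fun h₁ => Kfun c (max h₁ h₂)) (Ioi h₂) := by
    refine IntegrableOn.congr_fun (Kfun_integrableOn hc hh₂.le) (fun h₁ ht => ?_)
      measurableSet_Ioi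
    rw [max_eq_left (le_of_lt ht)]
  rw [← Ioc_union_Ioi_eq_Ioi hh₂.le,
    setIntegral_union (Ioc_disjoint_Ioi le_rfl) measurableSet_Ioi hint1 hint2]
  congr 1
  · rw [setIntegral_congr_fun measurableSet_Ioc
      (fun h₁ (ht : h₁ ∈ Ioc 0 h₂) => by rw [max_eq_right ht.2]),
      setIntegral_const, Real.volume_real_Ioc, sub_zero, max_eq_left hh₂.le, smul_eq_mul]
  · exact setIntegral_congr_fun measurableSet_Ioi
      (fun h₁ ht => by rw [max_eq_left (le_of_lt ht)])

lemma hK_mul_expand (c x : ℝ) : x * Kfun c x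
    = (Real.sqrt π / (2*Real.sqrt c)) * (x * Real.exp (-c*x^2))
      + (Real.sqrt π * Real.sqrt c) * (x^3 * Real.exp (-c*x^2)) := by
  unfold Kfun; rw [neg_mul]; ring

lemma int_hK {c : ℝ} (hc : 0 < c) :
    ∫ x in Ioi (0:ℝ), x * Kfun c x = 3 * Real.sqrt π / (4 * c * Real.sqrt c) := by
  have h := setIntegral_congr_fun (μ := volume) measurableSet_Ioi
    (fun x (_ : x ∈ Ioi (0:ℝ)) => hK_mul_expand c x)
  rw [h, integral_add ((tail_x1_int hc le_rfl).const_mul _) ((tail_x3_int hc le_rfl).const_mul _),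
    integral_const_mul, integral_const_mul, tail_x1 hc le_rfl, tail_x3 hc le_rfl]
  have hs2 : Real.sqrt c ^ 2 = c := Real.sq_sqrt hc.le
  have hspos : 0 < Real.sqrt c := Real.sqrt_pos.2 hc
  rw [← hs2]
  field_simp
  simp only [zero_pow two_ne_zero, mul_zero, neg_zero, Real.exp_zero, Real.sqrt_sq hspos.le]
  ring

lemma int_hK_integrable {c : ℝ} (hc : 0 < c) :
    IntegrableOn (fun x => x * Kfun c x) (Ioi (0:ℝ)) := by
  refine IntegrableOn.congr_fun ?_ (fun x _ => (hK_mul_expand c x).symm) measurableSet_Ioi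
  exact ((tail_x1_int hc le_rfl).const_mul _).add ((tail_x3_int hc le_rfl).const_mul _)

noncomputable def Tfun (c x : ℝ) : ℝ := ∫ h in Ioi x, Kfun c h

noncomputable def Wfun (c x : ℝ) : ℝ :=
  (Real.sqrt π/(2*Real.sqrt c)) * (-Real.exp (-c*x^2)/(2*c))
  + (Real.sqrt π*Real.sqrt c) * (-((c*x^2+1)*Real.exp (-c*x^2))/(2*c^2))

lemma Wfun_cont (c : ℝ) : Continuous (Wfun c) := by unfold Wfun; fun_prop

lemma Wfun_deriv {c : ℝ} (hc : 0 < c) (x : ℝ) : HasDerivAt (Wfun c) (x * Kfun c x) x := by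
  have h := ((hasDerivAt_F1 hc x).const_mul (Real.sqrt π/(2*Real.sqrt c))).add
    ((hasDerivAt_F3 x hc).const_mul (Real.sqrt π*Real.sqrt c))
  have heq : Real.sqrt π/(2*Real.sqrt c) * (x * Real.exp (-c*x^2))
      + Real.sqrt π*Real.sqrt c * (x^3 * Real.exp (-c*x^2)) = x * Kfun c x :=
    (hK_mul_expand c x).symm
  rw [heq] at h
  exact h

lemma Wfun_tendsto {c : ℝ} (hc : 0 < c) :
    Filter.Tendsto (Wfun c) Filter.atTop (nhds 0) := by
  have h := ((tendsto_F1 hc).const_mul (Real.sqrt π/(2*Real.sqrt c))).add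
    ((tendsto_F3 hc).const_mul (Real.sqrt π*Real.sqrt c))
  unfold Wfun
  simpa using h

lemma negW_eq {c : ℝ} (hc : 0 < c) (x : ℝ) : -(Wfun c x)
    = (Real.sqrt π/(2*Real.sqrt c)) * (Real.exp (-c*x^2)/(2*c))
      + (Real.sqrt π*Real.sqrt c) * ((c*x^2+1)*Real.exp (-c*x^2)/(2*c^2)) := by
  unfold Wfun; ring

lemma Tfun_eq {c : ℝ} (hc : 0 < c) : ∀ y : ℝ, 0 ≤ y →
    Tfun c y = Tfun c 0 - ∫ h in (0:ℝ)..y, Kfun c h := by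
  intro y hy
  have h1 : IntegrableOn (Kfun c) (Ioc 0 y) :=
    (Kfun_integrableOn hc le_rfl).mono_set Ioc_subset_Ioi_self
  have h2 : IntegrableOn (Kfun c) (Ioi y) := Kfun_integrableOn hc hy
  have h3 := setIntegral_union (μ := volume) (f := Kfun c)
    (Ioc_disjoint_Ioi le_rfl) measurableSet_Ioi h1 h2
  rw [Ioc_union_Ioi_eq_Ioi hy] at h3
  rw [intervalIntegral.integral_of_le hy]
  unfold Tfun
  rw [h3]
  ring

lemma Tfun_nonneg {c : ℝ} (hc : 0 < c) (x : ℝ) : 0 ≤ Tfun c x :=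
  setIntegral_nonneg measurableSet_Ioi (fun h _ => Kfun_nonneg hc h)

lemma Tfun_deriv {c : ℝ} (hc : 0 < c) {x : ℝ} (hx : 0 < x) :
    HasDerivAt (Tfun c) (-(Kfun c x)) x := by
  have hprim : HasDerivAt (fun y => ∫ h in (0:ℝ)..y, Kfun c h) (Kfun c x) x :=
    intervalIntegral.integral_hasDerivAt_right ((Kfun_cont c).intervalIntegrable 0 x)
      ((Kfun_cont c).stronglyMeasurableAtFilter _ _) (Kfun_cont c).continuousAt
  have hev : Tfun c =ᶠ[nhds x] fun y => Tfun c 0 - ∫ h in (0:ℝ)..y, Kfun c h := by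
    filter_upwards [Ioi_mem_nhds hx] with y hy
    exact Tfun_eq hc y (le_of_lt hy)
  have h := (hasDerivAt_const x (Tfun c 0)).sub hprim
  have h2 := h.congr_of_eventuallyEq hev
  simpa using h2

lemma Tfun_split {c : ℝ} (hc : 0 < c) {x : ℝ} (hx : 0 ≤ x) :
    Tfun c x = (Real.sqrt π/(2*Real.sqrt c)) * (∫ h in Ioi x, Real.exp (-c*h^2))
      + (Real.sqrt π*Real.sqrt c) * (∫ h in Ioi x, h^2 * Real.exp (-c*h^2)) := by
  unfold Tfun
  rw [setIntegral_congr_fun measurableSet_Ioi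
    (fun m (_ : m ∈ Ioi x) => Kfun_expand c m),
    integral_add ((intExp hc).const_mul _) ((intX2 hc hx).const_mul _),
    integral_const_mul, integral_const_mul]

lemma G_upper {c : ℝ} (hc : 0 < c) {x : ℝ} (hx : 0 < x) :
    x * Tfun c x ≤ -(Wfun c x) := by
  have hA : (0:ℝ) ≤ Real.sqrt π/(2*Real.sqrt c) := by positivity
  have hB : (0:ℝ) ≤ Real.sqrt π*Real.sqrt c := by positivity
  have h1 := tailExp_le hc hx
  have h2 := tailX2_le hc hx
  have e1 : x * (Real.exp (-c*x^2)/(2*c*x)) = Real.exp (-c*x^2)/(2*c) := by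
    field_simp
  have e2 : x * ((c*x^2+1) * Real.exp (-c*x^2)/(2*c^2*x))
      = (c*x^2+1) * Real.exp (-c*x^2)/(2*c^2) := by
    field_simp
  rw [Tfun_split hc hx.le, negW_eq hc]
  have b1 : x * (∫ h in Ioi x, Real.exp (-c*h^2)) ≤ Real.exp (-c*x^2)/(2*c) := by
    rw [← e1]
    exact mul_le_mul_of_nonneg_left h1 hx.le
  have b2 : x * (∫ h in Ioi x, h^2 * Real.exp (-c*h^2))
      ≤ (c*x^2+1) * Real.exp (-c*x^2)/(2*c^2) := by
    rw [← e2]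
    exact mul_le_mul_of_nonneg_left h2 hx.le
  calc x * ((Real.sqrt π/(2*Real.sqrt c)) * (∫ h in Ioi x, Real.exp (-c*h^2))
        + (Real.sqrt π*Real.sqrt c) * (∫ h in Ioi x, h^2 * Real.exp (-c*h^2)))
      = (Real.sqrt π/(2*Real.sqrt c)) * (x * (∫ h in Ioi x, Real.exp (-c*h^2)))
        + (Real.sqrt π*Real.sqrt c) * (x * (∫ h in Ioi x, h^2 * Real.exp (-c*h^2))) := by ring
    _ ≤ _ := add_le_add (mul_le_mul_of_nonneg_left b1 hA) (mul_le_mul_of_nonneg_left b2 hB)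

lemma G_tendsto {c : ℝ} (hc : 0 < c) :
    Filter.Tendsto (fun x => x * Tfun c x + Wfun c x) Filter.atTop (nhds 0) := by
  refine tendsto_of_tendsto_of_tendsto_of_le_of_le' (Wfun_tendsto hc)
    (tendsto_const_nhds) ?_ ?_
  · filter_upwards [Filter.Ioi_mem_atTop 0] with x hx
    have := mul_nonneg (le_of_lt (show (0:ℝ) < x from hx)) (Tfun_nonneg hc x)
    linarith
  · filter_upwards [Filter.Ioi_mem_atTop 0] with x hx
    have := G_upper hc (show (0:ℝ) < x from hx)
    linarith

lemma G_deriv {c : ℝ} (hc : 0 < c) {x : ℝ} (hx : 0 < x) :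
    HasDerivAt (fun x => x * Tfun c x + Wfun c x) (Tfun c x) x := by
  have h1 : HasDerivAt (fun y : ℝ => y * Tfun c y) (1 * Tfun c x + x * -(Kfun c x)) x := by
    exact (hasDerivAt_id' x).mul (Tfun_deriv hc hx)
  have h := h1.add (Wfun_deriv hc x)
  have heq : 1 * Tfun c x + x * -(Kfun c x) + x * Kfun c x = Tfun c x := by ring
  rw [heq] at h
  exact h

lemma G_cont0 {c : ℝ} (hc : 0 < c) :
    ContinuousWithinAt (fun x => x * Tfun c x + Wfun c x) (Ici 0) 0 := by
  have hP : Continuous (fun y : ℝ => ∫ h in (0:ℝ)..y, Kfun c h) :=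
    intervalIntegral.continuous_primitive (fun a b => (Kfun_cont c).intervalIntegrable a b) 0
  have hcont : Continuous
      (fun y : ℝ => y * (Tfun c 0 - ∫ h in (0:ℝ)..y, Kfun c h) + Wfun c y) :=
    (continuous_id.mul (continuous_const.sub hP)).add (Wfun_cont c)
  refine hcont.continuousWithinAt.congr (fun y hy => ?_) ?_
  · rw [Tfun_eq hc y hy]
  · rw [Tfun_eq hc 0 le_rfl, intervalIntegral.integral_same]
    ring

lemma negW0 {c : ℝ} (hc : 0 < c) :
    -(0 * Tfun c 0 + Wfun c 0) = 3 * Real.sqrt π / (4 * c * Real.sqrt c) := by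
  unfold Wfun
  have hs2 : Real.sqrt c ^ 2 = c := Real.sq_sqrt hc.le
  have hspos : 0 < Real.sqrt c := Real.sqrt_pos.2 hc
  rw [show -c * (0:ℝ)^2 = 0 by ring, Real.exp_zero]
  field_simp
  linear_combination (8 * Real.sqrt π) * hs2

lemma int_T {c : ℝ} (hc : 0 < c) :
    ∫ x in Ioi (0:ℝ), Tfun c x = 3 * Real.sqrt π / (4 * c * Real.sqrt c) := by
  have h := integral_Ioi_of_hasDerivAt_of_nonneg (G_cont0 hc)
    (fun x hx => G_deriv hc (show (0:ℝ) < x from hx))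
    (fun x _ => Tfun_nonneg hc x) (G_tendsto hc)
  rw [h, zero_sub, negW0 hc]

lemma int_T_integrable {c : ℝ} (hc : 0 < c) : IntegrableOn (Tfun c) (Ioi (0:ℝ)) :=
  integrableOn_Ioi_deriv_of_nonneg (G_cont0 hc)
    (fun x hx => G_deriv hc (show (0:ℝ) < x from hx))
    (fun x _ => Tfun_nonneg hc x) (G_tendsto hc)

lemma triple_integral {c : ℝ} (hc : 0 < c) :
    ∫ h₂ in Ioi (0:ℝ), ∫ h₁ in Ioi (0:ℝ), ∫ t in Ioi (0:ℝ),
        c * (1/4 * (t ^ 2 + 2 * (h₁ ^ 2 + h₂ ^ 2) + (h₂ ^ 2 - h₁ ^ 2) ^ 2 / t ^ 2)) *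
          Real.exp (-(c *
            (1/4 * (t ^ 2 + 2 * (h₁ ^ 2 + h₂ ^ 2) + (h₂ ^ 2 - h₁ ^ 2) ^ 2 / t ^ 2))))
      = 3 * Real.sqrt π / (2 * c * Real.sqrt c) := by
  have step1 : ∀ h₂ ∈ Ioi (0:ℝ),
      (∫ h₁ in Ioi (0:ℝ), ∫ t in Ioi (0:ℝ),
        c * (1/4 * (t ^ 2 + 2 * (h₁ ^ 2 + h₂ ^ 2) + (h₂ ^ 2 - h₁ ^ 2) ^ 2 / t ^ 2)) *
          Real.exp (-(c *
            (1/4 * (t ^ 2 + 2 * (h₁ ^ 2 + h₂ ^ 2) + (h₂ ^ 2 - h₁ ^ 2) ^ 2 / t ^ 2)))))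
        = h₂ * Kfun c h₂ + Tfun c h₂ := by
    intro h₂ hh₂
    have hh₂' : (0:ℝ) < h₂ := hh₂
    have inner : ∀ h₁ ∈ Ioi (0:ℝ),
        (∫ t in Ioi (0:ℝ),
          c * (1/4 * (t ^ 2 + 2 * (h₁ ^ 2 + h₂ ^ 2) + (h₂ ^ 2 - h₁ ^ 2) ^ 2 / t ^ 2)) *
            Real.exp (-(c *
              (1/4 * (t ^ 2 + 2 * (h₁ ^ 2 + h₂ ^ 2) + (h₂ ^ 2 - h₁ ^ 2) ^ 2 / t ^ 2)))))
          = Kfun c (max h₁ h₂) := fun h₁ hh₁ => inner_integral hc h₁ h₂ hh₁ hh₂'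
    rw [setIntegral_congr_fun measurableSet_Ioi inner, h1_integral hc hh₂']
    rfl
  rw [setIntegral_congr_fun measurableSet_Ioi step1,
    integral_add (int_hK_integrable hc) (int_T_integrable hc), int_hK hc, int_T hc]
  ring

end auxiliary_handover

/-- For all `λ > 0`,
`4λ² ∫₀^∞∫₀^∞∫₀^∞ λπ ĥ(t,h₁,h₂)² e^{−λπ ĥ(t,h₁,h₂)²} dt dh₁ dh₂ = 6√λ/π`, where
`ĥ(t,h₁,h₂)² = (1/4)[t² + 2(h₁² + h₂²) + (h₂² − h₁²)²/t²]`.  This triple integral is the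
intensity of the tropical-interference handover point process, i.e. the handover frequency
in the 2-Voronoi tessellation of a planar Poisson point process of intensity `λ`. -/
theorem stmt_7 (lam : ℝ) (hlam : 0 < lam) :
    4 * lam ^ 2 *
        ∫ h₂ in Ioi (0:ℝ), ∫ h₁ in Ioi (0:ℝ), ∫ t in Ioi (0:ℝ),
          lam * Real.pi *
              (1/4 * (t ^ 2 + 2 * (h₁ ^ 2 + h₂ ^ 2) + (h₂ ^ 2 - h₁ ^ 2) ^ 2 / t ^ 2)) *
            Real.exp (-(lam * Real.pi *
              (1/4 * (t ^ 2 + 2 * (h₁ ^ 2 + h₂ ^ 2) + (h₂ ^ 2 - h₁ ^ 2) ^ 2 / t ^ 2)))) =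
      6 * Real.sqrt lam / Real.pi := by
  have hπ : (0:ℝ) < Real.pi := Real.pi_pos
  have hc : (0:ℝ) < lam * Real.pi := mul_pos hlam hπ
  rw [triple_integral hc]
  have hs : Real.sqrt (lam * Real.pi) = Real.sqrt lam * Real.sqrt Real.pi :=
    Real.sqrt_mul hlam.le _
  have hl2 : Real.sqrt lam ^ 2 = lam := Real.sq_sqrt hlam.le
  have hp2 : Real.sqrt Real.pi ^ 2 = Real.pi := Real.sq_sqrt hπ.le
  have hlpos : 0 < Real.sqrt lam := Real.sqrt_pos.2 hlam
  have hppos : 0 < Real.sqrt Real.pi := Real.sqrt_pos.2 hπ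
  rw [hs]
  field_simp
  linear_combination (-12) * hl2
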